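/- Let (R,m,k) ⊆ (S,n,ℓ) be a module-finite local extension of normal local domains with finite separable fraction field extension K ⊆ L. If the trace map Tr : S → R is surjective and [ℓ : k] = [L : K], then S is a free R-module. -/

import Mathlib

theorem residueField_smul_eq_map_toAlgebra_smul (R S : Type*) [CommRing R] [IsLocalRing R]
    [CommRing S] [IsLocalRing S] [Algebra R S] [IsLocalHom (algebraMap R S)] :
    (DistribMulAction.toDistribSMul.toSMul : SMul (IsLocalRing.ResidueField R) (IsLocalRing.ResidueField S)) = (IsLocalRing.ResidueField.map (algebraMap R S)).toAlgebra.toSMul := by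
  ext a x
  obtain ⟨r, rfl⟩ := IsLocalRing.residue_surjective a
  obtain ⟨y, rfl⟩ := IsLocalRing.residue_surjective x
  show IsLocalRing.residue R r • IsLocalRing.residue S y = IsLocalRing.ResidueField.map (algebraMap R S) (IsLocalRing.residue R r) * IsLocalRing.residue S y
  rw [Algebra.smul_def, IsLocalRing.ResidueField.algebraMap_residue, IsLocalRing.ResidueField.map_residue]

/-- Let `(R,m,k) ⊆ (S,n,ℓ)` be a module-finite local extension of normal local
domains with finite separable fraction field extension `K ⊆ L`.  If the trace map `Tr : S → R`
is surjective and `[ℓ : k] = [L : K]`, then `S` is a free `R`-module. -/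
theorem free_of_trace_surjective_of_residue_degree_eq
    (R S K L : Type*)
    [CommRing R] [IsDomain R] [IsNoetherianRing R] [IsLocalRing R] [IsIntegrallyClosed R]
    [CommRing S] [IsDomain S] [IsNoetherianRing S] [IsLocalRing S] [IsIntegrallyClosed S]
    [Algebra R S] [Module.Finite R S]
    (hinj : Function.Injective (algebraMap R S))
    [IsLocalHom (algebraMap R S)]
    [Field K] [Field L] [Algebra R K] [IsFractionRing R K]
    [Algebra S L] [IsFractionRing S L]
    [Algebra K L] [Algebra R L] [IsScalarTower R S L] [IsScalarTower R K L]
    [FiniteDimensional K L] [Algebra.IsSeparable K L]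
    (Tr : S →ₗ[R] R)
    (hTr : ∀ s : S, algebraMap R K (Tr s) = Algebra.trace K L (algebraMap S L s))
    (hTrSurj : Function.Surjective Tr)
    (hdeg :
      letI : Algebra (IsLocalRing.ResidueField R) (IsLocalRing.ResidueField S) :=
        (IsLocalRing.ResidueField.map (algebraMap R S)).toAlgebra
      Module.finrank (IsLocalRing.ResidueField R) (IsLocalRing.ResidueField S) =
        Module.finrank K L) :
    Module.Free R S := by
  classical
  letI : Algebra (IsLocalRing.ResidueField R) (IsLocalRing.ResidueField S) :=
    (IsLocalRing.ResidueField.map (algebraMap R S)).toAlgebra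
  set k := IsLocalRing.ResidueField R
  set l := IsLocalRing.ResidueField S
  set n := Module.finrank K L with hn
  have hdeg' : Module.finrank k l = n := hdeg
  have hnpos : 0 < n := Module.finrank_pos
  have hfd : FiniteDimensional k l := .of_finrank_pos (hdeg' ▸ hnpos)
  -- basis of the residue field extension, and lifts to `S`
  let b : Module.Basis (Fin n) k l := Module.finBasisOfFinrankEq k l hdeg'
  choose e he using fun i : Fin n => IsLocalRing.residue_surjective (R := S) (b i)
  -- the candidate map `ψ : S → Rⁿ`
  set ψ : S →ₗ[R] (Fin n → R) :=
    LinearMap.pi (fun i => Tr ∘ₗ LinearMap.mulLeft R (e i)) with hψ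
  have hψapp : ∀ (s : S) (i : Fin n), ψ s i = Tr (e i * s) := by
    intro s i; simp [hψ]
  -- main trace computation
  have main : ∀ (c : Fin n → k),
      (∀ s : S, ∑ i, IsLocalRing.residue R (Tr (e i * s)) * c i = 0) → c = 0 := by
    intro c hc
    by_contra hcne
    choose c' hc' using fun i : Fin n => IsLocalRing.residue_surjective (R := R) (c i)
    set v : S := ∑ i, c' i • e i with hv
    have hresv : IsLocalRing.residue S v = ∑ i, c i • b i := by
      rw [hv, map_sum]
      refine Finset.sum_congr rfl fun i _ => ?_
      rw [Algebra.smul_def, map_mul, ← he i, ← hc' i]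
      rw [show IsLocalRing.residue S (algebraMap R S (c' i))
          = algebraMap k l (IsLocalRing.residue R (c' i)) from
        (IsLocalRing.ResidueField.map_residue (algebraMap R S) (c' i)).symm]
      rw [← Algebra.smul_def]
    have hvne : IsLocalRing.residue S v ≠ 0 := by
      rw [hresv]
      intro h0
      exact hcne (funext (Fintype.linearIndependent_iff.mp b.linearIndependent c (by convert h0; exact residueField_smul_eq_map_toAlgebra_smul R S)))
    have hvu : IsUnit v := by
      by_contra hnu
      exact hvne (Ideal.Quotient.eq_zero_iff_mem.mpr hnu)
    obtain ⟨s₀, hs₀⟩ := hTrSurj 1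
    have hTrvs : ∀ s : S, IsLocalRing.residue R (Tr (v * s)) = 0 := by
      intro s
      have : Tr (v * s) = ∑ i, c' i * Tr (e i * s) := by
        rw [hv, Finset.sum_mul]
        rw [show ∑ i, (c' i • e i) * s = ∑ i, c' i • (e i * s) by
          exact Finset.sum_congr rfl fun i _ => smul_mul_assoc _ _ _]
        rw [map_sum]
        exact Finset.sum_congr rfl fun i _ => by rw [map_smul, smul_eq_mul]
      rw [this, map_sum, ← hc s]
      exact Finset.sum_congr rfl fun i _ => by rw [map_mul, hc' i, mul_comm]
    have := hTrvs (↑hvu.unit⁻¹ * s₀)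
    rw [← mul_assoc, hvu.mul_val_inv, one_mul, hs₀, map_one] at this
    exact one_ne_zero this
  -- the image subspace of `θ : S → kⁿ`
  set θ : S → (Fin n → k) := fun s i => IsLocalRing.residue R (Tr (e i * s)) with hθ
  let W : Submodule k (Fin n → k) :=
  { carrier := Set.range θ
    add_mem' := by
      rintro _ _ ⟨s, rfl⟩ ⟨t, rfl⟩
      exact ⟨s + t, by funext i; simp [hθ, mul_add, map_add]⟩
    zero_mem' := ⟨0, by funext i; simp [hθ]⟩
    smul_mem' := by
      rintro cc _ ⟨s, rfl⟩
      obtain ⟨r, rfl⟩ := IsLocalRing.residue_surjective (R := R) cc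
      refine ⟨r • s, ?_⟩
      funext i
      show IsLocalRing.residue R (Tr (e i * (r • s)))
        = IsLocalRing.residue R r * IsLocalRing.residue R (Tr (e i * s))
      rw [mul_smul_comm, map_smul, smul_eq_mul, map_mul] }
  have hWtop : W = ⊤ := by
    by_contra hWne
    obtain ⟨f, hf0, hfbot⟩ :=
      Submodule.exists_dual_map_eq_bot_of_lt_top (lt_top_iff_ne_top.mpr hWne) inferInstance
    set c : Fin n → k := fun i => f (Pi.single i 1) with hcdef
    have hfc : ∀ u : Fin n → k, f u = ∑ i, u i * c i := by
      intro u
      have hu : u = ∑ i, u i • (Pi.single i (1 : k) : Fin n → k) := by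
        have h1 : ∀ i, u i • (Pi.single i (1 : k) : Fin n → k)
            = (Pi.single i (u i) : Fin n → k) := by
          intro i; rw [← Pi.single_smul, smul_eq_mul, mul_one]
        rw [Finset.sum_congr rfl fun i _ => h1 i, Finset.univ_sum_single]
      conv_lhs => rw [hu]
      rw [map_sum]
      exact Finset.sum_congr rfl fun i _ => by rw [map_smul, smul_eq_mul]
    have hcne : c ≠ 0 := by
      intro h0
      apply hf0
      refine LinearMap.ext fun u => ?_
      rw [hfc u, h0]
      simp
    apply hcne
    apply main
    intro s
    have hmem : θ s ∈ W := ⟨s, rfl⟩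
    have : f (θ s) = 0 := by
      have : f (θ s) ∈ Submodule.map f W := ⟨θ s, hmem, rfl⟩
      rwa [hfbot, Submodule.mem_bot] at this
    rwa [hfc (θ s)] at this
  -- surjectivity of ψ by Nakayama
  have hψsurj : Function.Surjective ψ := by
    rw [← LinearMap.range_eq_top, ← IsLocalRing.map_mkQ_eq_top]
    rw [Submodule.eq_top_iff']
    intro z
    obtain ⟨w, rfl⟩ := Submodule.mkQ_surjective _ z
    have : (fun i => IsLocalRing.residue R (w i)) ∈ W := hWtop ▸ Submodule.mem_top
    obtain ⟨s, hs⟩ := this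
    have hsub : ∀ i, w i - Tr (e i * s) ∈ IsLocalRing.maximalIdeal R := by
      intro i
      have := congrFun hs i
      exact (Ideal.Quotient.mk_eq_mk_iff_sub_mem _ _).mp this.symm
    have hmem : w - ψ s ∈ (IsLocalRing.maximalIdeal R) • (⊤ : Submodule R (Fin n → R)) := by
      have hrep : w - ψ s = ∑ i, (w i - Tr (e i * s)) • (Pi.single i (1 : R) : Fin n → R) := by
        have : ∀ i, (w i - Tr (e i * s)) • (Pi.single i (1 : R) : Fin n → R)
            = (Pi.single i ((w - ψ s) i) : Fin n → R) := by
          intro i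
          rw [← Pi.single_smul, smul_eq_mul, mul_one]
          congr 1
        rw [Finset.sum_congr rfl fun i _ => this i, Finset.univ_sum_single]
      rw [hrep]
      exact Submodule.sum_mem _ fun i _ =>
        Submodule.smul_mem_smul (hsub i) Submodule.mem_top
    refine ⟨ψ s, ⟨s, rfl⟩, ?_⟩
    exact ((Submodule.Quotient.eq _).mpr hmem).symm
  -- injectivity of ψ
  have hψinj : Function.Injective ψ := by
    rw [← LinearMap.ker_eq_bot]
    by_contra hker
    obtain ⟨x, hxker, hxne⟩ := (Submodule.ne_bot_iff _).mp hker
    obtain ⟨σ, hσ⟩ := Module.projective_lifting_property ψ LinearMap.id hψsurj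
    have hσap : ∀ u, ψ (σ u) = u := fun u => congrFun (congrArg DFunLike.coe hσ) u
    set y : Fin (n + 1) → S := Fin.snoc (fun j : Fin n => σ (Pi.single j 1)) x with hy
    have hyind : LinearIndependent R y := by
      rw [Fintype.linearIndependent_iff]
      intro a ha
      rw [Fin.sum_univ_castSucc] at ha
      simp only [hy, Fin.snoc_castSucc, Fin.snoc_last] at ha
      have h2 := congrArg ψ ha
      rw [map_add, map_sum, map_zero] at h2
      simp only [map_smul, hσap, LinearMap.map_smul] at h2
      rw [(LinearMap.mem_ker.mp hxker : ψ x = 0)] at h2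
      have hcast : ∀ j : Fin n, a j.castSucc = 0 := by
        intro j
        have := congrFun h2 j
        simpa [Pi.single_apply, Finset.sum_ite_eq] using this
      have hlast : a (Fin.last n) • x = 0 := by
        have : (∑ j : Fin n, a j.castSucc • σ (Pi.single j 1)) = 0 := by
          rw [Finset.sum_congr rfl fun j _ => by rw [hcast j, zero_smul]]
          simp
        rw [this, zero_add] at ha
        exact ha
      have hlast0 : a (Fin.last n) = 0 := by
        rw [Algebra.smul_def] at hlast
        rcases mul_eq_zero.mp hlast with h | h
        · have : algebraMap R S (a (Fin.last n)) = algebraMap R S 0 := by rw [map_zero]; exact h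
          exact hinj this
        · exact absurd h hxne
      intro j
      refine Fin.lastCases ?_ ?_ j
      · exact hlast0
      · exact hcast
    have hg : Function.Injective ((IsScalarTower.toAlgHom R S L).toLinearMap) := by
      have : Function.Injective (algebraMap S L) := IsFractionRing.injective S L
      exact this
    have hLind : LinearIndependent R
        (((IsScalarTower.toAlgHom R S L).toLinearMap) ∘ y) :=
      hyind.map' _ (LinearMap.ker_eq_bot.mpr hg)
    have hKind : LinearIndependent K
        (((IsScalarTower.toAlgHom R S L).toLinearMap) ∘ y) :=
      hLind.localization K (nonZeroDivisors R)
    have hcard := hKind.fintype_card_le_finrank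
    rw [Fintype.card_fin] at hcard
    omega
  exact Module.Free.of_equiv (LinearEquiv.ofBijective ψ ⟨hψinj, hψsurj⟩).symm
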